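/- Define the delayed-influence model P_δ on pairs of binary sequences of length 4: A₁,…,A₄ are i.i.d. uniform on {0,1}, B₁ is uniform on {0,1} independent of A, and for t ≥ 2, B_t = A_{t-1} with probability δ and otherwise B_t is uniform on {0,1} (independently). Then the expectation of c⁽¹⁾ under P_δ equals −(3/16)δ. -/

import Mathlib

/-- The observable `c⁽¹⁾` of Ver Steeg–Galstyan:
`(1{A₂=B₂≠A₃=B₃} − 1{A₂=B₃≠A₃=B₂})·(1 − 1{A₁≠A₄}1{B₁≠B₄})` (1-based indices). -/
noncomputable def c1 (A B : Fin 4 → Bool) : ℝ :=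
  ((if A 1 = B 1 ∧ B 1 ≠ A 2 ∧ A 2 = B 2 then (1:ℝ) else 0) -
     (if A 1 = B 2 ∧ B 2 ≠ A 2 ∧ A 2 = B 1 then (1:ℝ) else 0)) *
  (1 - (if A 0 ≠ A 3 then (1:ℝ) else 0) * (if B 0 ≠ B 3 then (1:ℝ) else 0))


/-- One-step kernel of the delayed-influence model: `B_t` equals `a` (the
previous action of Alice) with probability `δ`, else uniform. -/
noncomputable def mix (δ : ℝ) (a b : Bool) : ℝ := δ * (if b = a then 1 else 0) + (1 - δ) / 2

/-- The delayed-influence model `P_δ` on pairs of length-4 binary sequences: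
`A₁,…,A₄` i.i.d. uniform, `B₁` uniform, and for `t ≥ 2`, `B_t = A_{t-1}` with
probability `δ`, else uniform. -/
noncomputable def Pdelta (δ : ℝ) (A B : Fin 4 → Bool) : ℝ :=
  (1/2)^5 * mix δ (A 0) (B 1) * mix δ (A 1) (B 2) * mix δ (A 2) (B 3)

lemma sum4_aux (f : (Fin 4 → Bool) → ℝ) :
    ∑ A : Fin 4 → Bool, f A = ∑ a0 : Bool, ∑ a1 : Bool, ∑ a2 : Bool, ∑ a3 : Bool, f ![a0,a1,a2,a3] := by
  rw [← (Fin.consEquiv (fun _ : Fin (3+1) => Bool)).sum_comp, Fintype.sum_prod_type]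
  simp only [← (Fin.consEquiv (fun _ : Fin (2+1) => Bool)).sum_comp, Fintype.sum_prod_type]
  simp only [← (Fin.consEquiv (fun _ : Fin (1+1) => Bool)).sum_comp, Fintype.sum_prod_type]
  simp only [← (Fin.consEquiv (fun _ : Fin (0+1) => Bool)).sum_comp, Fintype.sum_prod_type]
  apply Finset.sum_congr rfl; intros; apply Finset.sum_congr rfl; intros
  apply Finset.sum_congr rfl; intros; apply Finset.sum_congr rfl; intros
  rw [Fintype.sum_subsingleton _ (fun i => i.elim0)]
  apply congrArg
  funext i; fin_cases i <;> rfl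

set_option maxHeartbeats 2000000 in
/-- Under the delayed-influence model `P_δ` the expectation of `c⁽¹⁾` equals
`−(3/16)δ`. -/
theorem c1_expectation_Pdelta (δ : ℝ) (hδ : δ ∈ Set.Icc (0:ℝ) 1) :
    ∑ A : Fin 4 → Bool, ∑ B : Fin 4 → Bool, Pdelta δ A B * c1 A B = -(3/16) * δ := by
  simp only [sum4_aux, Fintype.sum_bool]
  norm_num [Pdelta, c1, mix, Matrix.cons_val_two, Matrix.cons_val_three, Matrix.vecHead, Matrix.vecTail]
  ring
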